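/- Let F = a y^{s+α} + b x^α y^s with a,b ∈ ℂ nonzero, s > 0, α ≥ 1. If α ≤ s then rk(F) = s+1, and if α > s then rk(F) = α. -/

import Mathlib

open MvPolynomial

noncomputable def lin (c : ℂ × ℂ) : MvPolynomial (Fin 2) ℂ :=
  C c.1 * X 0 + C c.2 * X 1

noncomputable def waringRank (d : ℕ) (F : MvPolynomial (Fin 2) ℂ) : ℕ :=
  sInf {r | ∃ (a : Fin r → ℂ) (c : Fin r → ℂ × ℂ), F = ∑ i, C (a i) * lin (c i) ^ d}

lemma lin_pow_aux (p q : ℂ) (d j : ℕ) :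
    (Polynomial.C p * Polynomial.X) ^ j * Polynomial.C q ^ (d - j) * (d.choose j : Polynomial ℂ)
        = Polynomial.C ((d.choose j : ℂ) * p ^ j * q ^ (d-j)) * Polynomial.X ^ j := by
  simp [mul_pow, Polynomial.C_pow]
  ring

lemma coeff_linear_pow (p q : ℂ) (d k : ℕ) (hk : k ≤ d) :
    ((Polynomial.C p * Polynomial.X + Polynomial.C q) ^ d).coeff k
      = (d.choose k : ℂ) * p ^ k * q ^ (d - k) := by
  rw [add_pow, Polynomial.finset_sum_coeff]
  rw [Finset.sum_eq_single k]
  · rw [lin_pow_aux, Polynomial.coeff_C_mul, Polynomial.coeff_X_pow, if_pos rfl, mul_one]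
  · intro j hj hjk
    rw [lin_pow_aux, Polynomial.coeff_C_mul, Polynomial.coeff_X_pow, if_neg (fun h => hjk h.symm), mul_zero]
  · intro h
    exact absurd (Finset.mem_range.2 (Nat.lt_succ_of_le hk)) h

noncomputable def ftil (a b : ℂ) (d α : ℕ) : ℕ → ℂ :=
  fun k => if k = 0 then a else if k = α then b / (d.choose α : ℂ) else 0

lemma powersum_of_eval (a b : ℂ) (α d : ℕ) (hα : 0 < α) (hαd : α ≤ d)
    (r : ℕ) (A : Fin r → ℂ) (c : Fin r → ℂ × ℂ)
    (h : ∀ u : ℂ, a + b * u ^ α = ∑ i, A i * ((c i).1 * u + (c i).2) ^ d) :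
    ∀ k, k ≤ d → ∑ i, A i * (c i).1 ^ k * (c i).2 ^ (d - k) = ftil a b d α k := by
  have hchoose : ∀ k, k ≤ d → ((d.choose k : ℂ)) ≠ 0 := by
    intro k hk
    exact_mod_cast Nat.cast_ne_zero.2 (Nat.choose_pos hk).ne'
  set Pp : Polynomial ℂ := Polynomial.C a + Polynomial.C b * Polynomial.X ^ α with hPp
  set Qp : Polynomial ℂ := ∑ i, Polynomial.C (A i) *
      (Polynomial.C (c i).1 * Polynomial.X + Polynomial.C (c i).2) ^ d with hQp
  have hPQ : Pp = Qp := by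
    apply Polynomial.funext
    intro u
    simp only [hPp, hQp, Polynomial.eval_add, Polynomial.eval_mul, Polynomial.eval_pow,
      Polynomial.eval_C, Polynomial.eval_X, Polynomial.eval_finset_sum]
    exact h u
  intro k hk
  have h1 : Pp.coeff k = if k = 0 then a else if k = α then b else 0 := by
    simp only [hPp, Polynomial.coeff_add, Polynomial.coeff_C, Polynomial.coeff_C_mul,
      Polynomial.coeff_X_pow]
    rcases eq_or_ne k 0 with rfl | h0
    · simp [Ne.symm hα.ne']
    · rcases eq_or_ne k α with rfl | h4
      · simp [h0]
      · simp [h0, h4]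
  have h2 : Qp.coeff k = (d.choose k : ℂ) * ∑ i, A i * (c i).1 ^ k * (c i).2 ^ (d - k) := by
    simp only [hQp, Polynomial.finset_sum_coeff, Polynomial.coeff_C_mul]
    rw [Finset.mul_sum]
    refine Finset.sum_congr rfl fun i _ => ?_
    rw [coeff_linear_pow _ _ _ _ hk]
    ring
  have h3 : (d.choose k : ℂ) * (∑ i, A i * (c i).1 ^ k * (c i).2 ^ (d - k))
      = if k = 0 then a else if k = α then b else 0 := by
    rw [← h2, ← hPQ, h1]
  have hc := hchoose k hk
  unfold ftil
  rcases eq_or_ne k 0 with rfl | h0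
  · rw [if_pos rfl]
    rw [if_pos rfl] at h3
    have h4 : (d.choose 0 : ℂ) = 1 := by simp
    rw [h4, one_mul] at h3
    exact h3
  · rw [if_neg h0]
    rcases eq_or_ne k α with rfl | h4
    · rw [if_pos rfl, eq_div_iff hc]
      rw [if_neg h0, if_pos rfl] at h3
      rw [← h3]; ring
    · rw [if_neg h4]
      rw [if_neg h0, if_neg h4] at h3
      exact (mul_eq_zero.1 h3).resolve_left hc

lemma eval_decomp (a b : ℂ) (s α : ℕ) (r : ℕ) (A : Fin r → ℂ) (c : Fin r → ℂ × ℂ)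
    (hF : C a * X (1 : Fin 2) ^ (s + α) + C b * X 0 ^ α * X 1 ^ s
        = ∑ i, C (A i) * lin (c i) ^ (s + α)) (u : ℂ) :
    a + b * u ^ α = ∑ i, A i * ((c i).1 * u + (c i).2) ^ (s + α) := by
  have h := congrArg (MvPolynomial.eval (fun j : Fin 2 => if j = 0 then u else 1)) hF
  simpa [lin, mul_comm, mul_assoc, mul_left_comm] using h

open Finset in
lemma clean_decomp (d r : ℕ) (A : Fin r → ℂ) (c : Fin r → ℂ × ℂ) :
    ∃ (T : Finset ℂ) (W : ℂ → ℂ) (B : ℂ),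
      T.card + (if B = 0 then 0 else 1) ≤ r ∧
      ∀ k, k ≤ d → ∑ i, A i * (c i).1 ^ k * (c i).2 ^ (d - k)
        = (∑ t ∈ T, W t * t ^ k) + (if k = d then B else 0) := by
  classical
  set I : Finset (Fin r) := univ.filter (fun i => (c i).2 ≠ 0) with hI
  set J : Finset (Fin r) := univ.filter (fun i => (c i).2 = 0) with hJ
  set f : Fin r → ℂ := fun i => (c i).1 / (c i).2 with hf
  have hsplit : (univ : Finset (Fin r)) = I ∪ J := by
    ext i; by_cases h : (c i).2 = 0 <;> simp [hI, hJ, h]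
  have hdisj : Disjoint I J := by
    rw [Finset.disjoint_left]
    intro i hiI hiJ
    rw [hI, mem_filter] at hiI
    rw [hJ, mem_filter] at hiJ
    exact hiI.2 hiJ.2
  have hcard : I.card + J.card = r := by
    have h := card_union_of_disjoint hdisj
    rw [← hsplit, card_univ, Fintype.card_fin] at h
    omega
  refine ⟨I.image f, fun t => ∑ i ∈ I.filter (fun i => f i = t), A i * (c i).2 ^ d,
    ∑ i ∈ J, A i * (c i).1 ^ d, ?_, ?_⟩
  · by_cases hB : (∑ i ∈ J, A i * (c i).1 ^ d) = 0
    · rw [if_pos hB]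
      have := card_image_le (s := I) (f := f)
      omega
    · rw [if_neg hB]
      have hJne : 0 < J.card := by
        rcases J.eq_empty_or_nonempty with hemp | hne
        · rw [hemp] at hB; simp at hB
        · exact card_pos.2 hne
      have := card_image_le (s := I) (f := f)
      omega
  · intro k hk
    rw [show ∑ i, A i * (c i).1 ^ k * (c i).2 ^ (d - k)
        = ∑ i ∈ I, A i * (c i).1 ^ k * (c i).2 ^ (d - k)
          + ∑ i ∈ J, A i * (c i).1 ^ k * (c i).2 ^ (d - k) by
      rw [hsplit, sum_union hdisj]]
    congr 1
    · rw [← Finset.sum_fiberwise_of_maps_to (g := f)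
        (fun i hi => Finset.mem_image_of_mem f hi)
        (fun i => A i * (c i).1 ^ k * (c i).2 ^ (d - k))]
      refine Finset.sum_congr rfl fun t ht => ?_
      rw [Finset.sum_mul]
      refine Finset.sum_congr rfl fun i hi => ?_
      obtain ⟨hiI, hfi⟩ := Finset.mem_filter.1 hi
      have hq : (c i).2 ≠ 0 := by
        rw [hI, mem_filter] at hiI; exact hiI.2
      rw [← hfi, hf]
      have hqd : (c i).2 ^ d = (c i).2 ^ k * (c i).2 ^ (d - k) := by
        rw [← pow_add]; congr 1; omega
      simp only [div_pow]
      rw [hqd]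
      field_simp
    · rcases eq_or_ne k d with rfl | hkd
      · simp
      · rw [if_neg hkd]
        refine Finset.sum_eq_zero fun i hi => ?_
        have h2 : (c i).2 = 0 := by
          rw [hJ, mem_filter] at hi; exact hi.2
        have : d - k ≠ 0 := by omega
        simp [h2, zero_pow this]

open Finset in
lemma core_lower (a b' : ℂ) (ha : a ≠ 0) (hb : b' ≠ 0) (s α : ℕ) (hs : 0 < s) (hα : 0 < α)
    (T : Finset ℂ) (W : ℂ → ℂ) (B : ℂ)
    (hft : ∀ k, k ≤ s + α → (if k = 0 then a else if k = α then b' else 0)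
        = (∑ t ∈ T, W t * t ^ k) + (if k = s + α then B else 0)) :
    (α ≤ s → s + 1 ≤ T.card + (if B = 0 then 0 else 1)) ∧
    (s < α → α ≤ T.card + (if B = 0 then 0 else 1)) := by
  classical
  set d := s + α with hd
  set fh : ℕ → ℂ := fun k => if k = 0 then a else if k = α then b' else 0 with hfh
  set m := T.card with hm
  set bb : ℕ := if B = 0 then 0 else 1 with hbb
  set r' := m + bb with hr'
  set P : Polynomial ℂ := ∏ t ∈ T, (Polynomial.X - Polynomial.C t) with hP
  have hPm : P.Monic := Polynomial.monic_prod_of_monic _ _ (fun t _ => Polynomial.monic_X_sub_C t)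
  have hdeg : P.natDegree = m := by
    rw [hP, Polynomial.natDegree_prod _ _ (fun t _ => Polynomial.X_sub_C_ne_zero t)]
    simp [Polynomial.natDegree_X_sub_C, hm]
  have hbb1 : bb ≤ 1 := by rw [hbb]; split <;> omega
  have key : ∀ k, k + r' ≤ d → ∑ j ∈ range (r' + 1), P.coeff j * fh (k + j) = 0 := by
    intro k hk
    have hstep : ∀ j ∈ range (r' + 1), P.coeff j * fh (k + j)
        = (∑ t ∈ T, W t * t ^ k * (P.coeff j * t ^ j))
          + P.coeff j * (if k + j = d then B else 0) := by
      intro j hj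
      rw [mem_range] at hj
      rw [hfh]
      simp only
      rw [hft (k + j) (by omega)]
      rw [mul_add]
      congr 1
      rw [Finset.mul_sum]
      refine Finset.sum_congr rfl fun t ht => ?_
      rw [pow_add]; ring
    rw [Finset.sum_congr rfl hstep, Finset.sum_add_distrib]
    have e1 : ∑ j ∈ range (r' + 1), ∑ t ∈ T, W t * t ^ k * (P.coeff j * t ^ j) = 0 := by
      rw [Finset.sum_comm]
      refine Finset.sum_eq_zero fun t ht => ?_
      rw [← Finset.mul_sum]
      have hev : ∑ j ∈ range (r' + 1), P.coeff j * t ^ j = P.eval t := by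
        rw [Polynomial.eval_eq_sum_range' (by omega : P.natDegree < r' + 1)]
      rw [hev]
      have : P.eval t = 0 := by
        rw [hP, Polynomial.eval_prod]
        exact Finset.prod_eq_zero ht (by simp)
      rw [this, mul_zero]
    have e2 : ∑ j ∈ range (r' + 1), P.coeff j * (if k + j = d then B else 0) = 0 := by
      refine Finset.sum_eq_zero fun j hj => ?_
      rw [mem_range] at hj
      rcases eq_or_ne (k + j) d with he | he
      · rw [if_pos he]
        rcases eq_or_ne B 0 with hB | hB
        · rw [hB, mul_zero]
        · have hbb2 : bb = 1 := by rw [hbb, if_neg hB]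
          have hjr : j = r' := by omega
          have : P.coeff j = 0 := Polynomial.coeff_eq_zero_of_natDegree_lt (by omega)
          rw [this, zero_mul]
      · rw [if_neg he, mul_zero]
    rw [e1, e2, add_zero]
  have vanish1 : ∀ j, j < α → j ≤ r' → r' ≤ s + j → P.coeff j = 0 := by
    intro j hjα hjr hrs
    have h := key (α - j) (by omega)
    rw [Finset.sum_eq_single j] at h
    · have h2 : α - j + j = α := by omega
      rw [h2] at h
      have h3 : fh α = b' := by rw [hfh]; simp [hα.ne']
      rw [h3] at h
      exact (mul_eq_zero.1 h).resolve_right hb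
    · intro j' hj' hne
      have h4 : fh (α - j + j') = 0 := by
        rw [hfh]
        simp only
        rw [if_neg (by omega), if_neg (by omega)]
      rw [h4, mul_zero]
    · intro habs
      exact absurd (mem_range.2 (by omega)) habs
  refine ⟨?_, ?_⟩
  · -- case α ≤ s
    intro hαs
    by_contra hcon
    push_neg at hcon
    have hr's : r' ≤ s := by omega
    have hv : ∀ j, j < α → j ≤ r' → P.coeff j = 0 := fun j h1 h2 => vanish1 j h1 h2 (by omega)
    rcases lt_or_ge r' α with hc | hc
    · have : P.coeff m = 0 := hv m (by omega) (by omega)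
      rw [← hdeg] at this
      rw [hPm.coeff_natDegree] at this
      exact one_ne_zero this
    · -- α ≤ r'
      have hc0 : P.coeff 0 = 0 := hv 0 hα (by omega)
      have hcα : P.coeff α = 0 := by
        have h := key 0 (by omega)
        simp only [zero_add] at h
        have hz : ∀ j ∈ range (r' + 1), j ∉ ({0, α} : Finset ℕ) → P.coeff j * fh j = 0 := by
          intro j hj hj2
          simp only [Finset.mem_insert, Finset.mem_singleton] at hj2
          push_neg at hj2
          have hfj : fh j = 0 := by
            rw [hfh]; simp only; rw [if_neg hj2.1, if_neg hj2.2]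
          rw [hfj, mul_zero]
        have hsub : ({0, α} : Finset ℕ) ⊆ range (r' + 1) := by
          intro x hx
          simp only [Finset.mem_insert, Finset.mem_singleton] at hx
          rcases hx with rfl | rfl <;> exact mem_range.2 (by omega)
        rw [← Finset.sum_subset hsub hz] at h
        rw [Finset.sum_pair (by omega : (0:ℕ) ≠ α)] at h
        have hf0 : fh 0 = a := by rw [hfh]; simp
        have hfα : fh α = b' := by rw [hfh]; simp [hα.ne']
        rw [hf0, hfα, hc0, zero_mul, zero_add] at h
        exact (mul_eq_zero.1 h).resolve_right hb
      have hc1 : P.coeff 1 = 0 := by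
        rcases eq_or_ne α 1 with h1 | h1
        · rw [← h1]; exact hcα
        · exact hv 1 (by omega) (by omega)
      -- 0 is a root of P
      have h0T : (0 : ℂ) ∈ T := by
        have : P.eval 0 = 0 := by
          rw [← Polynomial.coeff_zero_eq_eval_zero]; exact hc0
        rw [hP, Polynomial.eval_prod] at this
        obtain ⟨t, htT, ht0⟩ := Finset.prod_eq_zero_iff.1 this
        simp only [Polynomial.eval_sub, Polynomial.eval_X, Polynomial.eval_C, zero_sub,
          neg_eq_zero] at ht0
        rwa [ht0] at htT
      have hPfac : P = Polynomial.X * ∏ t ∈ T.erase 0, (Polynomial.X - Polynomial.C t) := by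
        rw [hP, ← Finset.mul_prod_erase T _ h0T]
        simp
      have : P.coeff 1 = (∏ t ∈ T.erase 0, (Polynomial.X - Polynomial.C t)).coeff 0 := by
        rw [hPfac, Polynomial.coeff_X_mul]
      rw [hc1] at this
      have h5 : (∏ t ∈ T.erase 0, (Polynomial.X - Polynomial.C t)).coeff 0 = ∏ t ∈ T.erase 0, (-t) := by
        rw [Polynomial.coeff_zero_eq_eval_zero, Polynomial.eval_prod]
        refine Finset.prod_congr rfl fun t ht => ?_
        simp
      rw [h5] at this
      have h6 : ∏ t ∈ T.erase 0, (-t) ≠ 0 := by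
        refine Finset.prod_ne_zero_iff.2 fun t ht => ?_
        have := Finset.ne_of_mem_erase ht
        simpa using this
      exact h6 this.symm
  · -- case s < α
    intro hsα
    by_contra hcon
    push_neg at hcon
    have : P.coeff m = 0 := vanish1 m (by omega) (by omega) (by omega)
    rw [← hdeg] at this
    rw [hPm.coeff_natDegree] at this
    exact one_ne_zero this

open Finset Matrix in
lemma upper_decomp (d N : ℕ) (hN : 0 < N) (t : Fin N → ℂ) (ht : Function.Injective t)
    (u : ℕ → ℂ) (P : Polynomial ℂ) (hPm : P.Monic) (hPd : P.natDegree = N)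
    (hroot : ∀ i, P.eval (t i) = 0)
    (hrec : ∀ k, k + N ≤ d → ∑ j ∈ range (N + 1), P.coeff j * u (k + j) = 0) :
    ∃ A : Fin N → ℂ, ∀ k, k ≤ d → u k = ∑ i, A i * t i ^ k := by
  classical
  set M := (Matrix.vandermonde t)ᵀ with hM
  have hdet : IsUnit M.det := by
    rw [hM, Matrix.det_transpose, Matrix.det_vandermonde]
    refine (Finset.prod_ne_zero_iff.2 fun i _ => Finset.prod_ne_zero_iff.2 fun j hj => ?_).isUnit
    rw [Finset.mem_Ioi] at hj
    exact sub_ne_zero.2 fun h => hj.ne' (ht h)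
  set A : Fin N → ℂ := M⁻¹.mulVec (fun i => u i) with hA
  have hinit : ∀ i : Fin N, u i = ∑ j, A j * t j ^ (i : ℕ) := by
    intro i
    have h1 : M.mulVec A = fun i : Fin N => u i := by
      rw [hA, Matrix.mulVec_mulVec, Matrix.mul_nonsing_inv _ hdet, Matrix.one_mulVec]
    have h2 := congrFun h1 i
    rw [Matrix.mulVec, dotProduct] at h2
    rw [← h2]
    refine Finset.sum_congr rfl fun j _ => ?_
    rw [hM, Matrix.transpose_apply, Matrix.vandermonde_apply]
    ring
  refine ⟨A, fun k => ?_⟩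
  induction k using Nat.strong_induction_on with
  | _ k ih =>
    intro hkd
    rcases lt_or_ge k N with hkN | hkN
    · exact hinit ⟨k, hkN⟩
    · -- k = k' + N
      set k' := k - N with hk'
      have hkk : k = k' + N := by omega
      have h := hrec k' (by omega)
      rw [Finset.sum_range_succ] at h
      have hcN : P.coeff N = 1 := by rw [← hPd]; exact hPm.coeff_natDegree
      rw [hcN, one_mul] at h
      have h2 : u (k' + N) = -∑ j ∈ range N, P.coeff j * u (k' + j) := by
        rw [eq_neg_iff_add_eq_zero, add_comm]
        exact h
      have h3 : ∀ j ∈ range N, P.coeff j * u (k' + j)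
          = ∑ i, A i * t i ^ k' * (P.coeff j * t i ^ j) := by
        intro j hj
        rw [mem_range] at hj
        rw [ih (k' + j) (by omega) (by omega)]
        rw [Finset.mul_sum]
        refine Finset.sum_congr rfl fun i _ => ?_
        rw [pow_add]; ring
      have hti : ∀ i : Fin N, (t i) ^ N = -∑ j ∈ range N, P.coeff j * t i ^ j := by
        intro i
        have hr := hroot i
        rw [Polynomial.eval_eq_sum_range' (by omega : P.natDegree < N + 1)] at hr
        rw [Finset.sum_range_succ, hcN, one_mul] at hr
        exact eq_neg_of_add_eq_zero_right hr
      rw [hkk, h2, Finset.sum_congr rfl h3, Finset.sum_comm, ← Finset.sum_neg_distrib]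
      refine Finset.sum_congr rfl fun i _ => ?_
      rw [← Finset.mul_sum, pow_add, hti i]
      ring

open Finset in
lemma distinct_roots (P : Polynomial ℂ) (N : ℕ) (hN : 0 < N) (hPm : P.Monic)
    (hPd : P.natDegree = N)
    (hsep : ∀ z, P.eval z = 0 → P.derivative.eval z ≠ 0) :
    ∃ t : Fin N → ℂ, Function.Injective t ∧ ∀ i, P.eval (t i) = 0 := by
  classical
  have hP0 : P ≠ 0 := hPm.ne_zero
  have hnodup : P.roots.Nodup := by
    rw [Multiset.nodup_iff_count_le_one]
    intro z
    rw [Polynomial.count_roots]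
    by_contra h
    push_neg at h
    have hroot : P.IsRoot z := (Polynomial.rootMultiplicity_pos hP0).1 (by omega)
    have hder := Polynomial.isRoot_iterate_derivative_of_lt_rootMultiplicity
      (p := P) (t := z) (n := 1) (by omega)
    simp only [Function.iterate_one] at hder
    exact hsep z hroot hder
  have hcard : Multiset.card P.roots = N := by
    have h : Multiset.card P.roots = P.natDegree := IsAlgClosed.card_roots_eq_natDegree
    rw [hPd] at h; exact h
  have hfcard : P.roots.toFinset.card = N := by
    rw [Multiset.toFinset_card_of_nodup hnodup, hcard]
  obtain e := (Finset.equivFinOfCardEq hfcard).symm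
  refine ⟨fun i => (e i : ℂ), ?_, ?_⟩
  · intro i j hij
    exact e.injective (Subtype.ext hij)
  · intro i
    have := (e i).2
    rw [Multiset.mem_toFinset, Polynomial.mem_roots hP0] at this
    exact this

lemma sep_binomial (w : ℂ) (hw : w ≠ 0) (α : ℕ) (hα : 0 < α) :
    ∀ z : ℂ, (Polynomial.X ^ α - Polynomial.C w : Polynomial ℂ).eval z = 0 →
      (Polynomial.X ^ α - Polynomial.C w : Polynomial ℂ).derivative.eval z ≠ 0 := by
  intro z hz hz'
  simp only [Polynomial.eval_sub, Polynomial.eval_pow, Polynomial.eval_X,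
    Polynomial.eval_C] at hz
  have hz0 : z ≠ 0 := by
    intro h
    apply hw
    rw [h, zero_pow hα.ne', zero_sub, neg_eq_zero] at hz
    exact hz
  rw [Polynomial.derivative_sub, Polynomial.derivative_C, sub_zero,
    Polynomial.derivative_X_pow] at hz'
  simp only [Polynomial.eval_mul, Polynomial.eval_pow, Polynomial.eval_X,
    Polynomial.eval_natCast, Polynomial.eval_C] at hz'
  rcases mul_eq_zero.1 hz' with h | h
  · exact (Nat.cast_ne_zero.2 hα.ne' : (α:ℂ) ≠ 0) h
  · exact pow_ne_zero _ hz0 h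

lemma exists_good_trinomial (a b' : ℂ) (ha : a ≠ 0) (hb : b' ≠ 0) (s α : ℕ)
    (hα : 0 < α) (hαs : α ≤ s) :
    ∃ e f : ℂ, a * f + b' * e = 0 ∧ f ≠ 0 ∧
      ∀ z : ℂ, (Polynomial.X ^ (s+1) + Polynomial.C e * Polynomial.X ^ α + Polynomial.C f : Polynomial ℂ).eval z = 0 →
        (Polynomial.X ^ (s+1) + Polynomial.C e * Polynomial.X ^ α + Polynomial.C f : Polynomial ℂ).derivative.eval z ≠ 0 := by
  classical
  set w : ℂ := b' * ((s:ℂ)+1) / (a * ((s:ℂ) + 1 - α)) with hw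
  have hsα : ((s:ℂ) + 1 - (α:ℂ)) ≠ 0 := by
    have h1 : ((s + 1 - α : ℕ) : ℂ) = (s:ℂ) + 1 - α := by
      have h2 : α ≤ s + 1 := by omega
      push_cast [h2]
      ring
    rw [← h1]
    have h3 : s + 1 - α ≠ 0 := by omega
    exact_mod_cast h3
  have hs1 : ((s:ℂ) + 1) ≠ 0 := by
    have h1 : ((s + 1 : ℕ) : ℂ) = (s:ℂ) + 1 := by push_cast; ring
    rw [← h1]
    exact_mod_cast (Nat.succ_ne_zero s)
  have hαC : (α : ℂ) ≠ 0 := Nat.cast_ne_zero.2 hα.ne'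
  obtain ⟨c', hc⟩ := Infinite.exists_notMem_finset
    (insert (0:ℂ) (((Polynomial.X ^ α - Polynomial.C w).roots.toFinset).image
      (fun z => ((s:ℂ)+1) * z ^ (s + 1 - α) / (a * α))))
  have hc0 : c' ≠ 0 := fun h => hc (by rw [h]; exact Finset.mem_insert_self _ _)
  refine ⟨-a * c', b' * c', by ring, mul_ne_zero hb hc0, ?_⟩
  intro z hz hz'
  simp only [Polynomial.eval_add, Polynomial.eval_mul, Polynomial.eval_pow,
    Polynomial.eval_X, Polynomial.eval_C] at hz
  have hder : (Polynomial.X ^ (s+1) + Polynomial.C (-a * c') * Polynomial.X ^ α + Polynomial.C (b' * c') : Polynomial ℂ).derivative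
      = Polynomial.C ((s:ℂ)+1) * Polynomial.X ^ s + Polynomial.C (-a * c') * (Polynomial.C (α:ℂ) * Polynomial.X ^ (α-1)) := by
    rw [Polynomial.derivative_add, Polynomial.derivative_add, Polynomial.derivative_C,
      add_zero, Polynomial.derivative_C_mul, Polynomial.derivative_X_pow,
      Polynomial.derivative_X_pow]
    congr 1
    push_cast
    ring
  rw [hder] at hz'
  simp only [Polynomial.eval_add, Polynomial.eval_mul, Polynomial.eval_pow,
    Polynomial.eval_X, Polynomial.eval_C] at hz'
  -- hz : z^(s+1) + (-a*c') * z^α + b'*c' = 0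
  -- hz' : (s+1) * z^s + (-a*c') * (α * z^(α-1)) = 0
  have hz0 : z ≠ 0 := by
    intro h
    rw [h, zero_pow (by omega : s+1 ≠ 0), zero_pow hα.ne'] at hz
    simp only [mul_zero, add_zero, zero_add] at hz
    exact mul_ne_zero hb hc0 hz
  have hzs : z ^ s = z ^ (α-1) * z ^ (s+1-α) := by
    rw [← pow_add]; congr 1; omega
  have hzs1 : z ^ (s+1) = z ^ α * z ^ (s+1-α) := by
    rw [← pow_add]; congr 1; omega
  have hcval : ((s:ℂ)+1) * z ^ (s+1-α) = a * c' * α := by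
    have h4 : z ^ (α-1) ≠ 0 := pow_ne_zero _ hz0
    apply mul_right_cancel₀ h4
    calc ((s:ℂ)+1) * z ^ (s+1-α) * z ^ (α-1)
        = ((s:ℂ)+1) * z ^ s := by rw [hzs]; ring
      _ = a * c' * α * z ^ (α-1) := by linear_combination hz'
  have hroot : z ^ α = w := by
    rw [hw, eq_div_iff (mul_ne_zero ha hsα)]
    have h5 : ((s:ℂ)+1) * z ^ (s+1) = a * c' * α * z ^ α := by
      rw [hzs1]
      linear_combination z ^ α * hcval
    apply mul_left_cancel₀ hc0
    linear_combination h5 - ((s:ℂ)+1) * hz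
  apply hc
  apply Finset.mem_insert_of_mem
  refine Finset.mem_image.2 ⟨z, ?_, ?_⟩
  · rw [Multiset.mem_toFinset, Polynomial.mem_roots (Polynomial.X_pow_sub_C_ne_zero hα w)]
    simp only [Polynomial.IsRoot, Polynomial.eval_sub, Polynomial.eval_pow,
      Polynomial.eval_X, Polynomial.eval_C, hroot, sub_self]
  · rw [div_eq_iff (mul_ne_zero ha hαC)]
    linear_combination hcval

open Finset in
lemma build_decomp (a b : ℂ) (s α : ℕ) (hs : 0 < s) (hα : 0 < α)
    (N : ℕ) (A t : Fin N → ℂ)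
    (h : ∀ k, k ≤ s + α → ∑ i, A i * t i ^ k = ftil a b (s+α) α k) :
    C a * X (1 : Fin 2) ^ (s + α) + C b * X 0 ^ α * X 1 ^ s
      = ∑ i, C (A i) * lin (t i, 1) ^ (s + α) := by
  have hchoose : ((s+α).choose α : ℂ) ≠ 0 :=
    Nat.cast_ne_zero.2 (Nat.choose_pos (by omega)).ne'
  apply MvPolynomial.funext
  intro z
  rw [map_sum]
  simp only [MvPolynomial.eval_mul, MvPolynomial.eval_pow, MvPolynomial.eval_C,
    MvPolynomial.eval_add, MvPolynomial.eval_X, lin]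
  set u := z 0
  set v := z 1
  have hsub : ({0, α} : Finset ℕ) ⊆ range (s+α+1) := by
    intro x hx
    simp only [Finset.mem_insert, Finset.mem_singleton] at hx
    rcases hx with rfl | rfl <;> exact mem_range.2 (by omega)
  calc a * v ^ (s+α) + b * u ^ α * v ^ s
      = ∑ k ∈ ({0, α} : Finset ℕ), ftil a b (s+α) α k
          * (u ^ k * v ^ (s+α-k) * ((s+α).choose k : ℂ)) := by
        rw [Finset.sum_pair (by omega : (0:ℕ) ≠ α)]
        have h0 : ftil a b (s+α) α 0 = a := by simp [ftil]
        have hα2 : ftil a b (s+α) α α = b / ((s+α).choose α : ℂ) := by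
          simp [ftil, hα.ne']
        rw [h0, hα2]
        have : (s+α) - α = s := by omega
        rw [this]
        field_simp
        rw [Nat.sub_zero, Nat.choose_zero_right, Nat.cast_one]
        ring
    _ = ∑ k ∈ range (s+α+1), ftil a b (s+α) α k
          * (u ^ k * v ^ (s+α-k) * ((s+α).choose k : ℂ)) := by
        refine Finset.sum_subset hsub fun k hk hk2 => ?_
        simp only [Finset.mem_insert, Finset.mem_singleton] at hk2
        push_neg at hk2
        have : ftil a b (s+α) α k = 0 := by
          simp only [ftil]; rw [if_neg hk2.1, if_neg hk2.2]
        rw [this, zero_mul]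
    _ = ∑ k ∈ range (s+α+1), (∑ i, A i * t i ^ k)
          * (u ^ k * v ^ (s+α-k) * ((s+α).choose k : ℂ)) := by
        refine Finset.sum_congr rfl fun k hk => ?_
        rw [mem_range] at hk
        rw [h k (by omega)]
    _ = ∑ k ∈ range (s+α+1), ∑ i, A i * t i ^ k
          * (u ^ k * v ^ (s+α-k) * ((s+α).choose k : ℂ)) := by
        refine Finset.sum_congr rfl fun k hk => ?_
        rw [Finset.sum_mul]
    _ = ∑ i, ∑ k ∈ range (s+α+1), A i * t i ^ k
          * (u ^ k * v ^ (s+α-k) * ((s+α).choose k : ℂ)) := Finset.sum_comm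
    _ = ∑ i, A i * (t i * u + 1 * v) ^ (s+α) := by
        refine Finset.sum_congr rfl fun i _ => ?_
        rw [one_mul, add_pow, Finset.mul_sum]
        refine Finset.sum_congr rfl fun k hk => ?_
        rw [mul_pow]
        ring

open Finset in
lemma sum_ind (n j₀ : ℕ) (hj : j₀ < n) (v : ℂ) (u : ℕ → ℂ) :
    ∑ j ∈ Finset.range n, (if j = j₀ then v else 0) * u j = v * u j₀ := by
  rw [Finset.sum_eq_single j₀]
  · simp
  · intro j _ hne
    rw [if_neg hne, zero_mul]
  · intro h
    exact absurd (Finset.mem_range.2 hj) h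

-- trinomial facts
lemma trinomial_facts (e f : ℂ) (s α : ℕ) (hα : 0 < α) (hαs : α ≤ s) :
    (Polynomial.X ^ (s+1) + Polynomial.C e * Polynomial.X ^ α + Polynomial.C f : Polynomial ℂ).Monic ∧
    (Polynomial.X ^ (s+1) + Polynomial.C e * Polynomial.X ^ α + Polynomial.C f : Polynomial ℂ).natDegree = s + 1 ∧
    ∀ j, (Polynomial.X ^ (s+1) + Polynomial.C e * Polynomial.X ^ α + Polynomial.C f : Polynomial ℂ).coeff j
      = (if j = s+1 then 1 else 0) + ((if j = α then e else 0) + (if j = 0 then f else 0)) := by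
  refine ⟨?_, ?_, ?_⟩
  · monicity!
    all_goals first
      | omega
      | (rw [if_neg (show ¬ s + 1 = α by omega)]; norm_num)
      | (rw [if_pos (show α ≤ s + 1 by omega), if_neg (show ¬ s + 1 ≤ α by omega)]; norm_num)
      | (rw [if_neg (show ¬ s < α by omega)]; norm_num)
    all_goals omega
  · compute_degree!
    all_goals first
      | omega
      | (rw [if_neg (show ¬ s + 1 = α by omega)]; norm_num)
  · intro j
    simp only [Polynomial.coeff_add, Polynomial.coeff_X_pow, Polynomial.coeff_C_mul,
      Polynomial.coeff_C]
    split_ifs <;> first | rfl | ring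

lemma binomial_coeff (w : ℂ) (α : ℕ) (hα : 0 < α) :
    ∀ j, (Polynomial.X ^ α - Polynomial.C w : Polynomial ℂ).coeff j
      = (if j = α then 1 else 0) - (if j = 0 then w else 0) := by
  intro j
  simp only [Polynomial.coeff_sub, Polynomial.coeff_X_pow, Polynomial.coeff_C]


theorem waring_rank_binomial_r_zero (a b : ℂ) (ha : a ≠ 0) (hb : b ≠ 0)
    (s α : ℕ) (hs : 0 < s) (hα : 1 ≤ α) :
    (α ≤ s →
      waringRank (s + α) (C a * X (1 : Fin 2) ^ (s + α) + C b * X 0 ^ α * X 1 ^ s) = s + 1) ∧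
    (s < α →
      waringRank (s + α) (C a * X (1 : Fin 2) ^ (s + α) + C b * X 0 ^ α * X 1 ^ s) = α) := by
  have hα0 : 0 < α := hα
  have hchoose : ((s+α).choose α : ℂ) ≠ 0 :=
    Nat.cast_ne_zero.2 (Nat.choose_pos (by omega)).ne'
  set b' : ℂ := b / ((s+α).choose α : ℂ) with hb'def
  have hb' : b' ≠ 0 := div_ne_zero hb hchoose
  -- Lower bound for any decomposition
  have lower : ∀ r (A : Fin r → ℂ) (c : Fin r → ℂ × ℂ),
      (C a * X (1 : Fin 2) ^ (s + α) + C b * X 0 ^ α * X 1 ^ s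
        = ∑ i, C (A i) * lin (c i) ^ (s + α)) →
      (α ≤ s → s + 1 ≤ r) ∧ (s < α → α ≤ r) := by
    intro r A c hFr
    have heval := eval_decomp a b s α r A c hFr
    have hps := powersum_of_eval a b α (s+α) hα0 (by omega) r A c heval
    obtain ⟨T, W, B, hcard, hTW⟩ := clean_decomp (s+α) r A c
    have hft : ∀ k, k ≤ s + α → (if k = 0 then a else if k = α then b' else 0)
        = (∑ t ∈ T, W t * t ^ k) + (if k = s + α then B else 0) := by
      intro k hk
      have h1 := (hps k hk).symm.trans (hTW k hk)
      rw [← h1]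
      simp only [ftil]
      rw [hb'def]
    have hcore := core_lower a b' ha hb' s α hs hα0 T W B hft
    exact ⟨fun h1 => le_trans (hcore.1 h1) (le_trans (by omega) hcard),
      fun h2 => le_trans (hcore.2 h2) (le_trans (by omega) hcard)⟩
  -- upper bound, case α ≤ s
  have mem1 : α ≤ s → ∃ (A : Fin (s+1) → ℂ) (c : Fin (s+1) → ℂ × ℂ),
      C a * X (1 : Fin 2) ^ (s + α) + C b * X 0 ^ α * X 1 ^ s
        = ∑ i, C (A i) * lin (c i) ^ (s + α) := by
    intro hαs
    obtain ⟨e, f, hef, hf0, hsep⟩ := exists_good_trinomial a b' ha hb' s α hα0 hαs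
    obtain ⟨hPm, hPd, hPc⟩ := trinomial_facts e f s α hα0 hαs
    obtain ⟨t, htinj, htroot⟩ := distinct_roots
      (Polynomial.X ^ (s+1) + Polynomial.C e * Polynomial.X ^ α + Polynomial.C f)
      (s+1) (by omega) hPm hPd hsep
    have hrec : ∀ k, k + (s+1) ≤ s + α →
        ∑ j ∈ Finset.range ((s+1)+1),
          (Polynomial.X ^ (s+1) + Polynomial.C e * Polynomial.X ^ α
            + Polynomial.C f : Polynomial ℂ).coeff j * ftil a b (s+α) α (k+j) = 0 := by
      intro k hk
      have hterm : ∀ j ∈ Finset.range ((s+1)+1),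
          (Polynomial.X ^ (s+1) + Polynomial.C e * Polynomial.X ^ α
            + Polynomial.C f : Polynomial ℂ).coeff j * ftil a b (s+α) α (k+j)
          = (if j = s+1 then (1:ℂ) else 0) * ftil a b (s+α) α (k+j)
            + ((if j = α then e else 0) * ftil a b (s+α) α (k+j)
              + (if j = 0 then f else 0) * ftil a b (s+α) α (k+j)) := by
        intro j _
        rw [hPc j]
        ring
      rw [Finset.sum_congr rfl hterm, Finset.sum_add_distrib, Finset.sum_add_distrib,
        sum_ind _ _ (by omega) 1 (fun j => ftil a b (s+α) α (k+j)),
        sum_ind _ _ (by omega) e (fun j => ftil a b (s+α) α (k+j)),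
        sum_ind _ _ (by omega) f (fun j => ftil a b (s+α) α (k+j))]
      have h1 : ftil a b (s+α) α (k+(s+1)) = 0 := by
        simp only [ftil]
        rw [if_neg (by omega), if_neg (by omega)]
      rcases eq_or_ne k 0 with rfl | hk0
      · have h2 : ftil a b (s+α) α (0+α) = b' := by
          simp only [ftil]
          rw [if_neg (by omega), if_pos (by omega), hb'def]
        have h3 : ftil a b (s+α) α (0+0) = a := by simp [ftil]
        rw [h1, h2, h3]
        linear_combination hef
      · have h2 : ftil a b (s+α) α (k+α) = 0 := by
          simp only [ftil]
          rw [if_neg (by omega), if_neg (by omega)]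
        have h3 : ftil a b (s+α) α (k+0) = 0 := by
          simp only [ftil]
          rw [if_neg (by omega), if_neg (by omega)]
        rw [h1, h2, h3]
        ring
    obtain ⟨A, hA⟩ := upper_decomp (s+α) (s+1) (by omega) t htinj (ftil a b (s+α) α)
      _ hPm hPd htroot hrec
    exact ⟨A, fun i => (t i, 1),
      build_decomp a b s α hs hα0 (s+1) A t (fun k hk => (hA k hk).symm)⟩
  -- upper bound, case s < α
  have mem2 : s < α → ∃ (A : Fin α → ℂ) (c : Fin α → ℂ × ℂ),
      C a * X (1 : Fin 2) ^ (s + α) + C b * X 0 ^ α * X 1 ^ s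
        = ∑ i, C (A i) * lin (c i) ^ (s + α) := by
    intro hsα
    set w : ℂ := b' / a with hwdef
    have hw : w ≠ 0 := div_ne_zero hb' ha
    have hPm : (Polynomial.X ^ α - Polynomial.C w : Polynomial ℂ).Monic :=
      Polynomial.monic_X_pow_sub_C w hα0.ne'
    have hPd : (Polynomial.X ^ α - Polynomial.C w : Polynomial ℂ).natDegree = α :=
      Polynomial.natDegree_X_pow_sub_C
    obtain ⟨t, htinj, htroot⟩ := distinct_roots (Polynomial.X ^ α - Polynomial.C w)
      α hα0 hPm hPd (sep_binomial w hw α hα0)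
    have hrec : ∀ k, k + α ≤ s + α →
        ∑ j ∈ Finset.range (α+1),
          (Polynomial.X ^ α - Polynomial.C w : Polynomial ℂ).coeff j
            * ftil a b (s+α) α (k+j) = 0 := by
      intro k hk
      have hterm : ∀ j ∈ Finset.range (α+1),
          (Polynomial.X ^ α - Polynomial.C w : Polynomial ℂ).coeff j
            * ftil a b (s+α) α (k+j)
          = (if j = α then (1:ℂ) else 0) * ftil a b (s+α) α (k+j)
            - (if j = 0 then w else 0) * ftil a b (s+α) α (k+j) := by
        intro j _
        rw [binomial_coeff w α hα0 j]
        ring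
      rw [Finset.sum_congr rfl hterm, Finset.sum_sub_distrib,
        sum_ind _ _ (by omega) 1 (fun j => ftil a b (s+α) α (k+j)),
        sum_ind _ _ (by omega) w (fun j => ftil a b (s+α) α (k+j))]
      rcases eq_or_ne k 0 with rfl | hk0
      · have h2 : ftil a b (s+α) α (0+α) = b' := by
          simp only [ftil]
          rw [if_neg (by omega), if_pos (by omega), hb'def]
        have h3 : ftil a b (s+α) α (0+0) = a := by simp [ftil]
        rw [h2, h3, one_mul, hwdef, div_mul_cancel₀ _ ha, sub_self]
      · have h2 : ftil a b (s+α) α (k+α) = 0 := by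
          simp only [ftil]
          rw [if_neg (by omega), if_neg (by omega)]
        have h3 : ftil a b (s+α) α (k+0) = 0 := by
          simp only [ftil]
          rw [if_neg (by omega), if_neg (by omega)]
        rw [h2, h3]
        ring
    obtain ⟨A, hA⟩ := upper_decomp (s+α) α hα0 t htinj (ftil a b (s+α) α)
      _ hPm hPd htroot hrec
    exact ⟨A, fun i => (t i, 1),
      build_decomp a b s α hs hα0 α A t (fun k hk => (hA k hk).symm)⟩
  constructor
  · intro hαs
    apply le_antisymm
    · exact Nat.sInf_le (mem1 hαs)
    · refine le_csInf ⟨s+1, mem1 hαs⟩ ?_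
      rintro r ⟨A, c, h⟩
      exact (lower r A c h).1 hαs
  · intro hsα
    apply le_antisymm
    · exact Nat.sInf_le (mem2 hsα)
    · refine le_csInf ⟨α, mem2 hsα⟩ ?_
      rintro r ⟨A, c, h⟩
      exact (lower r A c h).2 hsα
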